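/- The orthogonal regression slope lies between the two conjugate classical regression slopes: for 2D data with positive covariance s_xy > 0 and positive variances, the slope m of the orthogonal regression line through the centroid satisfies s_xy/s_xx ≤ m ≤ s_yy/s_xy, i.e., the TLS line lies within the 'scissors' formed by the y-on-x regression line (slope s_xy/s_xx) and the x-on-y regression line (slope s_yy/s_xy). -/
import Mathlib


/-- The orthogonal regression slope lies between the two conjugate classical
regression slopes. -/
theorem stmt_17 (n : ℕ) (x y : Fin n → ℝ) (xbar ybar sxx syy sxy m : ℝ)
    (hx : xbar = (∑ i, x i) / n) (hy : ybar = (∑ i, y i) / n)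
    (hsxx : sxx = ∑ i, (x i - xbar) ^ 2)
    (hsyy : syy = ∑ i, (y i - ybar) ^ 2)
    (hsxy : sxy = ∑ i, (x i - xbar) * (y i - ybar))
    (hxx : 0 < sxx) (hyy : 0 < syy) (hxy : 0 < sxy)
    (hm : m = (syy - sxx + Real.sqrt ((syy - sxx) ^ 2 + 4 * sxy ^ 2)) / (2 * sxy)) :
    sxy / sxx ≤ m ∧ m ≤ syy / sxy := by
  have hcs : sxy ^ 2 ≤ sxx * syy := by
    rw [hsxx, hsyy, hsxy]
    exact Finset.sum_mul_sq_le_sq_mul_sq _ _ _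
  set s := Real.sqrt ((syy - sxx) ^ 2 + 4 * sxy ^ 2) with hsdef
  have hs0 : 0 ≤ s := Real.sqrt_nonneg _
  have hs2 : s ^ 2 = (syy - sxx) ^ 2 + 4 * sxy ^ 2 := by
    rw [hsdef, Real.sq_sqrt (by positivity)]
  constructor
  · rw [hm, div_le_div_iff₀ hxx (by positivity)]
    nlinarith [mul_nonneg hs0 hxx.le, sq_nonneg (s * sxx - (2 * sxy ^ 2 - (syy - sxx) * sxx)),
      sq_nonneg (s * sxx + (2 * sxy ^ 2 - (syy - sxx) * sxx))]
  · rw [hm, div_le_div_iff₀ (by positivity) hxy]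
    have hle : s ≤ syy + sxx := by nlinarith [sq_nonneg (syy + sxx - s)]
    nlinarith
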